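/- arXiv:1608.05033 — 2 statements merged into one kernel-verified Lean document; each statement's English description precedes it below -/
import Mathlib

section
/- (Transference principle) Let Γ be a group of polynomial growth acting on a probability space (X,ℬ,μ) by measure-preserving transformations, let E ⊆ X be measurable, let m ∈ ℕ, and for L ∈ ℕ and x ∈ X set B_{L,m,x} := {g ∈ Γ : g·x ∈ E and ‖g‖ ≤ L−m}. Suppose t ≥ 0 and there exists L₀ such that for all L ≥ L₀ and μ-almost all x, |B_{L,m,x}|/|B(L)| ≤ t. Then μ(E) ≤ t. -/
open Filter MeasureTheory Function Set
open scoped BigOperators ENNReal NNReal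

variable {Γ : Type*} [Group Γ]

/-- The word norm associated to a finite generating set `S`:
the infimum of `Σ |pᵢ|` over all representations `γ = s₁^{p₁} ⋯ s_l^{p_l}` with `sᵢ ∈ S`. -/
noncomputable def wordNorm (S : Finset Γ) (γ : Γ) : ℕ :=
  sInf {n | ∃ l : List (Γ × ℤ), (∀ p ∈ l, p.1 ∈ S) ∧
    (l.map fun p => p.1 ^ p.2).prod = γ ∧ (l.map fun p => p.2.natAbs).sum = n}

/-- Closed ball of radius `r` around `x` for the right word metric `d_R(x,y) = ‖x y⁻¹‖`. -/
def wordBall (S : Finset Γ) (x : Γ) (r : ℝ) : Set Γ :=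
  {y | (wordNorm S (x * y⁻¹) : ℝ) ≤ r}

private lemma rev_prod_aux (l : List (Γ × ℤ)) :
    ((l.map fun p : Γ × ℤ => p.1 ^ (-p.2)).reverse).prod
      = ((l.map fun p : Γ × ℤ => p.1 ^ p.2).prod)⁻¹ := by
  induction l with
  | nil => simp
  | cons a l ih =>
      simp only [zpow_neg] at ih
      simp [List.prod_append, ih, zpow_neg, mul_inv_rev]

lemma wordNorm_rep (S : Finset Γ) (hS : Subgroup.closure (S : Set Γ) = ⊤) (γ : Γ) :
    ∃ l : List (Γ × ℤ), (∀ p ∈ l, p.1 ∈ S) ∧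
      (l.map fun p => p.1 ^ p.2).prod = γ ∧ (l.map fun p => p.2.natAbs).sum = wordNorm S γ := by
  have hne : {n | ∃ l : List (Γ × ℤ), (∀ p ∈ l, p.1 ∈ S) ∧
      (l.map fun p => p.1 ^ p.2).prod = γ ∧ (l.map fun p => p.2.natAbs).sum = n}.Nonempty := by
    have hγ : γ ∈ Subgroup.closure (S : Set Γ) := hS ▸ Subgroup.mem_top γ
    have : ∃ l : List (Γ × ℤ), (∀ p ∈ l, p.1 ∈ S) ∧ (l.map fun p => p.1 ^ p.2).prod = γ := by
      induction hγ using Subgroup.closure_induction with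
      | mem x hx => exact ⟨[(x, 1)], by simpa using hx, by simp⟩
      | one => exact ⟨[], by simp, by simp⟩
      | mul x y hx hy ihx ihy =>
          obtain ⟨l1, h1, h1p⟩ := ihx; obtain ⟨l2, h2, h2p⟩ := ihy
          refine ⟨l1 ++ l2, ?_, ?_⟩
          · intro p hp; rcases List.mem_append.1 hp with h | h
            exacts [h1 p h, h2 p h]
          · simp [List.prod_append, h1p, h2p]
      | inv x hx ihx =>
          obtain ⟨l, hl, hlp⟩ := ihx
          refine ⟨(l.map fun p => (p.1, -p.2)).reverse, ?_, ?_⟩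
          · intro p hp
            simp only [List.mem_reverse, List.mem_map] at hp
            obtain ⟨a, ha, rfl⟩ := hp
            exact hl a ha
          · rw [List.map_reverse, List.map_map]
            have : ((fun p : Γ × ℤ => p.1 ^ p.2) ∘ fun p : Γ × ℤ => (p.1, -p.2))
                = fun p : Γ × ℤ => p.1 ^ (-p.2) := rfl
            rw [this, rev_prod_aux, hlp]
    obtain ⟨l, h1, h2⟩ := this
    exact ⟨(l.map fun p => p.2.natAbs).sum, l, h1, h2, rfl⟩
  exact Nat.sInf_mem hne

lemma wordNorm_one (S : Finset Γ) : wordNorm S 1 = 0 := by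
  have : 0 ∈ {n | ∃ l : List (Γ × ℤ), (∀ p ∈ l, p.1 ∈ S) ∧
      (l.map fun p => p.1 ^ p.2).prod = 1 ∧ (l.map fun p => p.2.natAbs).sum = n} :=
    ⟨[], by simp, by simp, by simp⟩
  exact Nat.sInf_eq_zero.2 (Or.inl this)

private lemma finite_prodSet {A : Set Γ} (hA : A.Finite) (n : ℕ) :
    {g : Γ | ∃ l : List Γ, (∀ a ∈ l, a ∈ A) ∧ l.length ≤ n ∧ l.prod = g}.Finite := by
  induction n with
  | zero =>
      refine (Set.finite_singleton (1 : Γ)).subset ?_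
      rintro g ⟨l, -, hlen, rfl⟩
      have : l = [] := List.length_eq_zero_iff.mp (Nat.le_zero.mp hlen)
      simp [this]
  | succ n ih =>
      refine ((hA.insert 1).mul ih).subset ?_
      rintro g ⟨l, hmem, hlen, rfl⟩
      cases l with
      | nil =>
          exact ⟨1, Set.mem_insert _ _, 1, ⟨[], by simp, by simp, by simp⟩, by simp⟩
      | cons a l =>
          refine ⟨a, Set.mem_insert_of_mem _ (hmem a (by simp)), l.prod,
            ⟨l, fun b hb => hmem b (by simp [hb]), ?_, rfl⟩, by simp⟩
          simpa using Nat.succ_le_succ_iff.mp hlen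

lemma ballNat_finite (S : Finset Γ) (hS : Subgroup.closure (S : Set Γ) = ⊤) (n : ℕ) :
    {g : Γ | wordNorm S g ≤ n}.Finite := by
  have hA : ((S : Set Γ) ∪ (fun x : Γ => x⁻¹) '' S).Finite :=
    S.finite_toSet.union (S.finite_toSet.image _)
  refine (finite_prodSet hA n).subset ?_
  intro g hg
  obtain ⟨l, hl, hprod, hsum⟩ := wordNorm_rep S hS g
  refine ⟨l.flatMap fun p => List.replicate p.2.natAbs (if 0 ≤ p.2 then p.1 else p.1⁻¹),
    ?_, ?_, ?_⟩
  · intro a ha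
    simp only [List.mem_flatMap, List.mem_replicate] at ha
    obtain ⟨p, hp, -, rfl⟩ := ha
    by_cases h0 : 0 ≤ p.2
    · rw [if_pos h0]; exact Or.inl (hl p hp)
    · rw [if_neg h0]; exact Or.inr ⟨p.1, hl p hp, rfl⟩
  · rw [List.length_flatMap]
    calc (l.map fun p => (List.replicate p.2.natAbs
          (if 0 ≤ p.2 then p.1 else p.1⁻¹)).length).sum
        = (l.map fun p => p.2.natAbs).sum := by
          congr 1; apply List.map_congr_left; intro p _; simp
      _ ≤ n := hsum ▸ hg
  · rw [List.flatMap, List.prod_flatten, List.map_map, ← hprod]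
    congr 1
    apply List.map_congr_left
    intro p _
    simp only [Function.comp_apply, List.prod_replicate]
    by_cases h0 : 0 ≤ p.2
    · rw [if_pos h0, ← zpow_natCast, Int.natAbs_of_nonneg h0]
    · rw [if_neg h0, inv_pow, ← zpow_natCast, ← zpow_neg]
      congr 1
      omega

lemma ballReal_finite (S : Finset Γ) (hS : Subgroup.closure (S : Set Γ) = ⊤) (r : ℝ) :
    {g : Γ | (wordNorm S g : ℝ) ≤ r}.Finite := by
  refine (ballNat_finite S hS ⌈max r 0⌉₊).subset ?_
  intro g hg
  have : (wordNorm S g : ℝ) ≤ (⌈max r 0⌉₊ : ℝ) :=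
    le_trans hg (le_trans (le_max_left _ _) (Nat.le_ceil _))
  exact_mod_cast this

def wordBall' (S : Finset Γ) (x : Γ) (r : ℝ) : Set Γ := {y | (wordNorm S (x * y⁻¹) : ℝ) ≤ r}

lemma wordBall'_one (S : Finset Γ) (r : ℝ) :
    wordBall' S 1 r = (fun g : Γ => g⁻¹) '' {g | (wordNorm S g : ℝ) ≤ r} := by
  ext y
  constructor
  · intro hy
    exact ⟨y⁻¹, by simpa [wordBall'] using hy, inv_inv y⟩
  · rintro ⟨g, hg, rfl⟩
    simpa [wordBall'] using hg

/-- Transference principle: a universal upper bound on the density of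
`B_{L,m,x} = {g : g·x ∈ E, ‖g‖ ≤ L-m}` in `B(L)` bounds `μ(E)` from above. -/
theorem transference_principle (S : Finset Γ) (hS : Subgroup.closure (S : Set Γ) = ⊤)
    (d : ℕ) (cΓ : ℝ) (hc : 0 < cΓ)
    (hP : Tendsto (fun n : ℕ => ((wordBall S 1 (n : ℝ)).ncard : ℝ) / (n : ℝ) ^ d)
      atTop (nhds cΓ))
    {X : Type*} [MeasurableSpace X] (μ : Measure X) [IsProbabilityMeasure μ]
    (T : Γ → X → X) (hT1 : ∀ x, T 1 x = x) (hTmul : ∀ g h x, T (g * h) x = T g (T h x))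
    (hmp : ∀ g, MeasurePreserving (T g) μ μ)
    (E : Set X) (hE : MeasurableSet E) (m : ℕ) (t : ℝ) (ht : 0 ≤ t)
    (h : ∃ L₀ : ℕ, ∀ L : ℕ, L₀ ≤ L → ∀ᵐ x ∂μ,
      (({g : Γ | T g x ∈ E ∧ (wordNorm S g : ℝ) ≤ (L : ℝ) - (m : ℝ)}).ncard : ℝ) /
        ((wordBall S 1 (L : ℝ)).ncard : ℝ) ≤ t) :
    μ E ≤ ENNReal.ofReal t := by
  classical
  obtain ⟨L₀, hL₀⟩ := h
  have hBfin : ∀ r : ℝ, {g : Γ | (wordNorm S g : ℝ) ≤ r}.Finite :=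
    fun r => ballReal_finite S hS r
  have hWB : ∀ r : ℝ, wordBall S 1 r = (fun g : Γ => g⁻¹) '' {g | (wordNorm S g : ℝ) ≤ r} :=
    fun r => wordBall'_one S r
  have hballfin : ∀ r : ℝ, (wordBall S 1 r).Finite := fun r => by
    rw [hWB]; exact (hBfin r).image _
  have hballcard : ∀ r : ℝ, (wordBall S 1 r).ncard = ({g : Γ | (wordNorm S g : ℝ) ≤ r}).ncard :=
    fun r => by rw [hWB]; exact Set.ncard_image_of_injective _ inv_injective
  set N : ℕ → ℕ := fun n => (wordBall S 1 (n : ℝ)).ncard with hN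
  have hNpos : ∀ n : ℕ, 0 < N n := by
    intro n
    refine (Set.ncard_pos (hballfin _)).2 ⟨1, ?_⟩
    simp [wordBall, wordNorm_one]
  -- key inequality
  have key : ∀ L : ℕ, max L₀ m ≤ L → (μ E).toReal * (N (L - m) : ℝ) ≤ t * (N L : ℝ) := by
    intro L hL
    have hLm : m ≤ L := le_trans (le_max_right _ _) hL
    have hae := hL₀ L (le_trans (le_max_left _ _) hL)
    set k := L - m with hk
    have hcast : (L : ℝ) - (m : ℝ) = (k : ℝ) := (Nat.cast_sub hLm).symm
    set F : Finset Γ := (hBfin (k : ℝ)).toFinset with hF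
    have hFcard : F.card = N k := by
      show F.card = (wordBall S 1 (k : ℝ)).ncard
      rw [hballcard, Set.ncard_eq_toFinset_card _ (hBfin (k : ℝ))]
    have hsetx : ∀ x : X, {g : Γ | T g x ∈ E ∧ (wordNorm S g : ℝ) ≤ (L : ℝ) - (m : ℝ)}
        = ↑(F.filter fun g => T g x ∈ E) := by
      intro x
      ext g
      simp only [Set.mem_setOf_eq, Finset.coe_filter, hF, Set.Finite.mem_toFinset,
        Set.mem_setOf_eq, hcast]
      tauto
    have hmeasg : ∀ g : Γ, MeasurableSet (T g ⁻¹' E) := fun g => (hmp g).measurable hE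
    have hint : ∫⁻ x, (((F.filter fun g => T g x ∈ E).card : ℕ) : ℝ≥0∞) ∂μ
        = (F.card : ℝ≥0∞) * μ E := by
      have hx : ∀ x : X, (((F.filter fun g => T g x ∈ E).card : ℕ) : ℝ≥0∞)
          = ∑ g ∈ F, (T g ⁻¹' E).indicator (fun _ => (1 : ℝ≥0∞)) x := by
        intro x
        rw [Finset.card_filter]
        push_cast
        refine Finset.sum_congr rfl fun g _ => ?_
        by_cases hxE : T g x ∈ E <;> simp [hxE, Set.indicator]
      simp_rw [hx]
      rw [MeasureTheory.lintegral_finset_sum _ (fun g _ =>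
        (measurable_const.indicator (hmeasg g)))]
      have : ∀ g ∈ F, ∫⁻ x, (T g ⁻¹' E).indicator (fun _ => (1 : ℝ≥0∞)) x ∂μ = μ E := by
        intro g _
        have h1 : ∫⁻ x, (T g ⁻¹' E).indicator (fun _ => (1 : ℝ≥0∞)) x ∂μ = μ (T g ⁻¹' E) :=
          lintegral_indicator_one (hmeasg g)
        rw [h1]
        exact (hmp g).measure_preimage hE.nullMeasurableSet
      rw [Finset.sum_congr rfl this, Finset.sum_const, nsmul_eq_mul]
    have hbound : ∫⁻ x, (((F.filter fun g => T g x ∈ E).card : ℕ) : ℝ≥0∞) ∂μ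
        ≤ ENNReal.ofReal (t * (N L : ℝ)) := by
      have hNL : (0 : ℝ) < (N L : ℝ) := by exact_mod_cast hNpos L
      calc ∫⁻ x, (((F.filter fun g => T g x ∈ E).card : ℕ) : ℝ≥0∞) ∂μ
          ≤ ∫⁻ _, ENNReal.ofReal (t * (N L : ℝ)) ∂μ := by
            refine lintegral_mono_ae ?_
            filter_upwards [hae] with x hx
            rw [hsetx x, Set.ncard_coe_finset] at hx
            rw [div_le_iff₀ hNL] at hx
            calc (((F.filter fun g => T g x ∈ E).card : ℕ) : ℝ≥0∞)
                = ENNReal.ofReal (((F.filter fun g => T g x ∈ E).card : ℕ) : ℝ) := by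
                  rw [ENNReal.ofReal_natCast]
              _ ≤ ENNReal.ofReal (t * (N L : ℝ)) := ENNReal.ofReal_le_ofReal hx
        _ = ENNReal.ofReal (t * (N L : ℝ)) := by simp
    have hcomb : (F.card : ℝ≥0∞) * μ E ≤ ENNReal.ofReal (t * (N L : ℝ)) := hint ▸ hbound
    have hne1 : (F.card : ℝ≥0∞) * μ E ≠ ⊤ :=
      ENNReal.mul_ne_top (ENNReal.natCast_ne_top _) (measure_ne_top μ E)
    have hNL0 : (0 : ℝ) ≤ t * (N L : ℝ) := by positivity
    have := (ENNReal.toReal_le_toReal hne1 ENNReal.ofReal_ne_top).2 hcomb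
    simp only [ENNReal.toReal_mul, ENNReal.toReal_natCast,
      ENNReal.toReal_ofReal hNL0] at this
    rw [hFcard] at this
    calc (μ E).toReal * (N k : ℝ) = (N k : ℝ) * (μ E).toReal := mul_comm _ _
      _ ≤ t * (N L : ℝ) := this
  -- analytic part
  suffices hfin : (μ E).toReal ≤ t by
    calc μ E = ENNReal.ofReal (μ E).toReal := (ENNReal.ofReal_toReal (measure_ne_top μ E)).symm
      _ ≤ ENNReal.ofReal t := ENNReal.ofReal_le_ofReal hfin
  set c := (μ E).toReal with hcdef
  have h2 : Tendsto (fun L : ℕ => (N L : ℝ) / (L : ℝ) ^ d) atTop (nhds cΓ) := hP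
  have hsub : Tendsto (fun L : ℕ => L - m) atTop atTop := tendsto_sub_atTop_nat m
  have h1a : Tendsto (fun L : ℕ => (N (L - m) : ℝ) / ((L - m : ℕ) : ℝ) ^ d)
      atTop (nhds cΓ) := by
    exact h2.comp hsub
  have hfrac : Tendsto (fun L : ℕ => (((L - m : ℕ) : ℝ) / (L : ℝ)) ^ d) atTop (nhds 1) := by
    have hbase : Tendsto (fun L : ℕ => ((L - m : ℕ) : ℝ) / (L : ℝ)) atTop (nhds 1) := by
      have hm : Tendsto (fun L : ℕ => 1 - (m : ℝ) / (L : ℝ)) atTop (nhds 1) := by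
        have hdiv := Filter.Tendsto.div_atTop
          (tendsto_const_nhds (x := (m : ℝ)) (f := (atTop : Filter ℕ)))
          (tendsto_natCast_atTop_atTop (R := ℝ))
        simpa using (tendsto_const_nhds (x := (1 : ℝ)) (f := (atTop : Filter ℕ))).sub hdiv
      refine hm.congr' ?_
      filter_upwards [eventually_ge_atTop (m + 1)] with L hL
      have hL0 : (0 : ℝ) < (L : ℝ) := by
        have : (0 : ℕ) < L := by omega
        exact_mod_cast this
      have hLm : m ≤ L := by omega
      rw [Nat.cast_sub hLm]
      field_simp
    simpa using hbase.pow d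
  have h1 : Tendsto (fun L : ℕ => (N (L - m) : ℝ) / (L : ℝ) ^ d) atTop (nhds cΓ) := by
    have hmul := h1a.mul hfrac
    rw [mul_one] at hmul
    refine hmul.congr' ?_
    filter_upwards [eventually_ge_atTop (m + 1)] with L hL
    have hx : (0 : ℝ) < ((L - m : ℕ) : ℝ) := by
      have : 0 < L - m := by omega
      exact_mod_cast this
    have hy : (0 : ℝ) < (L : ℝ) := by
      have : 0 < L := by omega
      exact_mod_cast this
    rw [div_pow, div_mul_div_comm, mul_comm ((((L - m : ℕ) : ℝ)) ^ d) _,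
      mul_div_mul_right _ _ (by positivity : (((L - m : ℕ) : ℝ)) ^ d ≠ 0)]
  have hineq : c * cΓ ≤ t * cΓ := by
    refine le_of_tendsto_of_tendsto (h1.const_mul c) (h2.const_mul t) ?_
    filter_upwards [eventually_ge_atTop (max (max L₀ m) 1)] with L hL
    have hkey := key L (le_trans (le_max_left _ _) hL)
    have hLd : (0 : ℝ) < (L : ℝ) ^ d := by
      have : (0 : ℕ) < L := le_trans (le_max_right _ _) hL
      have h0 : (0 : ℝ) < (L : ℝ) := by exact_mod_cast this
      positivity
    have := (div_le_div_iff_of_pos_right hLd).2 hkey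
    calc c * ((N (L - m) : ℝ) / (L : ℝ) ^ d) = c * (N (L - m) : ℝ) / (L : ℝ) ^ d := by ring
      _ ≤ t * (N L : ℝ) / (L : ℝ) ^ d := this
      _ = t * ((N L : ℝ) / (L : ℝ) ^ d) := by ring
  exact (mul_le_mul_iff_left₀ hc).1 hineq
end

section
/- Let Γ be a group of polynomial growth of degree d with lim_{n→∞}|B(n)|/n^d = c_Γ > 0, and let δ ∈ (0,1). Then there exist integers n₀, r₀ > 2 depending only on Γ and δ such that: whenever 𝒞 is a finite collection of pairwise disjoint balls in Γ with all radii greater than n₀ and r ≥ r₀, one has |⊔_{W∈𝒞} W| ≥ (1−δ)|⋃_{W∈𝒞} (1 + 4/(r−2))·W|. -/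
open Filter MeasureTheory Function Set
open scoped BigOperators

variable {Γ : Type*} [Group Γ]

lemma exists_rep (S : Finset Γ) (hS : Subgroup.closure (S : Set Γ) = ⊤) (γ : Γ) :
    ∃ l : List (Γ × ℤ), (∀ p ∈ l, p.1 ∈ S) ∧ (l.map fun p => p.1 ^ p.2).prod = γ := by
  have hmem : γ ∈ Subgroup.closure (S : Set Γ) := by rw [hS]; trivial
  induction hmem using Subgroup.closure_induction with
  | mem x hx => exact ⟨[(x, 1)], by simpa using hx, by simp⟩
  | one => exact ⟨[], by simp, by simp⟩
  | mul x y hx hy ihx ihy =>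
    obtain ⟨l1, h1, h1p⟩ := ihx
    obtain ⟨l2, h2, h2p⟩ := ihy
    refine ⟨l1 ++ l2, ?_, ?_⟩
    · intro p hp; rcases List.mem_append.mp hp with h | h
      · exact h1 p h
      · exact h2 p h
    · simp [List.map_append, List.prod_append, h1p, h2p]
  | inv x hx ih =>
    obtain ⟨l, hl, hlp⟩ := ih
    refine ⟨l.reverse.map (fun p => (p.1, -p.2)), ?_, ?_⟩
    · intro p hp
      simp only [List.mem_map, List.mem_reverse] at hp
      obtain ⟨q, hq, rfl⟩ := hp
      exact hl q hq
    · rw [← hlp, List.map_map, List.prod_inv_reverse]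
      simp [List.map_reverse, List.map_map, Function.comp_def, zpow_neg]

lemma rep_to_list (S : Finset Γ) (l : List (Γ × ℤ)) (hl : ∀ p ∈ l, p.1 ∈ S) :
    ∃ m : List Γ, m.length = (l.map fun p => p.2.natAbs).sum ∧
      (∀ x ∈ m, x ∈ (S : Set Γ) ∪ (S : Set Γ)⁻¹) ∧
      m.prod = (l.map fun p => p.1 ^ p.2).prod := by
  induction l with
  | nil => exact ⟨[], by simp, by simp, by simp⟩
  | cons p l ih =>
    obtain ⟨m, hm1, hm2, hm3⟩ := ih (fun q hq => hl q (List.mem_cons_of_mem _ hq))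
    refine ⟨List.replicate p.2.natAbs (if 0 ≤ p.2 then p.1 else p.1⁻¹) ++ m, ?_, ?_, ?_⟩
    · simp [hm1]
    · intro x hx
      rcases List.mem_append.mp hx with h | h
      · have := List.eq_of_mem_replicate h
        subst this
        have hp : p.1 ∈ S := hl p List.mem_cons_self
        split
        · exact Or.inl hp
        · exact Or.inr (by simpa using hp)
      · exact hm2 x h
    · rw [List.prod_append, List.prod_replicate, hm3, List.map_cons, List.prod_cons]
      congr 1
      rcases le_or_gt 0 p.2 with h | h
      · rw [if_pos h, ← zpow_natCast, Int.natAbs_of_nonneg h]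
      · rw [if_neg (not_le.mpr h), inv_pow, ← zpow_natCast, ← zpow_neg]
        congr 1
        omega

lemma prod_lists_finite {T : Set Γ} (hT : T.Finite) (n : ℕ) :
    {γ : Γ | ∃ m : List Γ, m.length = n ∧ (∀ x ∈ m, x ∈ T) ∧ m.prod = γ}.Finite := by
  induction n with
  | zero =>
    apply (Set.finite_singleton (1 : Γ)).subset
    rintro γ ⟨m, hlen, -, hprod⟩
    rw [List.length_eq_zero_iff.mp hlen] at hprod
    simp [← hprod]
  | succ n ih =>
    apply (hT.image2 (· * ·) ih).subset
    rintro γ ⟨m, hlen, hmem, hprod⟩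
    cases m with
    | nil => simp at hlen
    | cons a m' =>
      exact ⟨a, hmem a List.mem_cons_self, m'.prod,
        ⟨m', by simpa using hlen, fun x hx => hmem x (List.mem_cons_of_mem _ hx), rfl⟩,
        by simpa using hprod⟩

lemma normBall_finite (S : Finset Γ) (hS : Subgroup.closure (S : Set Γ) = ⊤) (n : ℕ) :
    {γ : Γ | wordNorm S γ ≤ n}.Finite := by
  have hT : ((S : Set Γ) ∪ (S : Set Γ)⁻¹ ∪ {1}).Finite :=
    ((S.finite_toSet.union S.finite_toSet.inv).union (Set.finite_singleton 1))
  apply (prod_lists_finite hT n).subset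
  intro γ hγ
  obtain ⟨l0, hl0, hl0p⟩ := exists_rep S hS γ
  have hne : {k | ∃ l : List (Γ × ℤ), (∀ p ∈ l, p.1 ∈ S) ∧
      (l.map fun p => p.1 ^ p.2).prod = γ ∧ (l.map fun p => p.2.natAbs).sum = k}.Nonempty :=
    ⟨_, l0, hl0, hl0p, rfl⟩
  obtain ⟨l, hl, hlp, hls⟩ := Nat.sInf_mem hne
  obtain ⟨m, hm1, hm2, hm3⟩ := rep_to_list S l hl
  have hw : (l.map fun p => p.2.natAbs).sum ≤ n := by
    rw [hls]; exact hγ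
  refine ⟨m ++ List.replicate (n - (l.map fun p => p.2.natAbs).sum) 1, ?_, ?_, ?_⟩
  · simp [hm1]; omega
  · intro x hx
    rcases List.mem_append.mp hx with h | h
    · exact Or.inl (hm2 x h)
    · exact Or.inr (List.eq_of_mem_replicate h)
  · rw [List.prod_append, List.prod_replicate, one_pow, mul_one, hm3, hlp]

lemma normSet_eq (S : Finset Γ) {r : ℝ} (hr : 0 ≤ r) :
    {γ : Γ | (wordNorm S γ : ℝ) ≤ r} = {γ : Γ | wordNorm S γ ≤ ⌊r⌋₊} := by
  ext γ
  simp only [Set.mem_setOf_eq]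
  rw [Nat.le_floor_iff hr]

lemma wordBall_eq (S : Finset Γ) (x : Γ) (r : ℝ) :
    wordBall S x r = (fun g => g⁻¹ * x) '' {γ : Γ | (wordNorm S γ : ℝ) ≤ r} := by
  ext y
  constructor
  · intro h
    exact ⟨x * y⁻¹, h, by group⟩
  · rintro ⟨g, hg, rfl⟩
    simpa [wordBall, mul_assoc] using hg

lemma wordBall_finite (S : Finset Γ) (hS : Subgroup.closure (S : Set Γ) = ⊤) (x : Γ) (r : ℝ) :
    (wordBall S x r).Finite := by
  rw [wordBall_eq]
  apply Set.Finite.image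
  apply (normBall_finite S hS ⌈r⌉₊).subset
  intro γ hγ
  simp only [Set.mem_setOf_eq] at *
  have : (wordNorm S γ : ℝ) ≤ (⌈r⌉₊ : ℝ) := hγ.trans (Nat.le_ceil r)
  exact_mod_cast this

lemma wordBall_ncard (S : Finset Γ) (x : Γ) {r : ℝ} (hr : 0 ≤ r) :
    (wordBall S x r).ncard = (wordBall S 1 ((⌊r⌋₊ : ℕ) : ℝ)).ncard := by
  rw [wordBall_eq, wordBall_eq, normSet_eq S hr, normSet_eq S (by positivity)]
  rw [Nat.floor_natCast]
  rw [Set.ncard_image_of_injective _ (fun a b hab => by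
    simpa using hab : Function.Injective fun g : Γ => g⁻¹ * x)]
  rw [Set.ncard_image_of_injective _ (fun a b hab => by
    simpa using hab : Function.Injective fun g : Γ => g⁻¹ * 1)]

lemma wordBall_mono (S : Finset Γ) (x : Γ) {r r' : ℝ} (h : r ≤ r') :
    wordBall S x r ⊆ wordBall S x r' := fun y hy => le_trans hy h

/-- For large balls and large `r`, a disjoint collection of balls occupies at least a
`(1-δ)`-fraction of the union of its `(1+4/(r-2))`-enlargements. -/
theorem small_enlargement (S : Finset Γ) (hS : Subgroup.closure (S : Set Γ) = ⊤)
    (d : ℕ) (cΓ : ℝ) (hc : 0 < cΓ)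
    (hP : Tendsto (fun n : ℕ => ((wordBall S 1 (n : ℝ)).ncard : ℝ) / (n : ℝ) ^ d)
      atTop (nhds cΓ))
    (δ : ℝ) (hδ : δ ∈ Set.Ioo (0 : ℝ) 1) :
    ∃ n₀ r₀ : ℕ, 2 < n₀ ∧ 2 < r₀ ∧ ∀ (k : ℕ) (y : Fin k → Γ) (s : Fin k → ℝ),
      (∀ i, (n₀ : ℝ) < s i) →
      Pairwise (Function.onFun Disjoint fun i => wordBall S (y i) (s i)) →
      ∀ r : ℝ, (r₀ : ℝ) ≤ r →
      (1 - δ) * ((⋃ i, wordBall S (y i) ((1 + 4 / (r - 2)) * s i)).ncard : ℝ) ≤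
        ((⋃ i, wordBall S (y i) (s i)).ncard : ℝ) := by
  classical
  obtain ⟨hδ0, hδ1⟩ := hδ
  -- choose ε
  obtain ⟨ε, hε, hq1⟩ : ∃ ε : ℝ, 0 < ε ∧ (1 - δ) * (1 + ε) ^ (2 * d) < 1 := by
    have hcont : ContinuousAt (fun ε : ℝ => (1 - δ) * (1 + ε) ^ (2 * d)) 0 := by fun_prop
    have hval : (1 - δ) * (1 + (0:ℝ)) ^ (2 * d) = 1 - δ := by norm_num
    have htt : Tendsto (fun ε : ℝ => (1 - δ) * (1 + ε) ^ (2 * d)) (nhdsWithin 0 (Set.Ioi 0))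
        (nhds (1 - δ)) := by
      have := hcont.tendsto.mono_left (nhdsWithin_le_nhds (s := Set.Ioi (0:ℝ)))
      rwa [hval] at this
    obtain ⟨e, h1, h2⟩ := ((htt.eventually_lt_const (by linarith : 1 - δ < 1)).and
      self_mem_nhdsWithin).exists
    exact ⟨e, h2, h1⟩
  have hq0 : 0 ≤ (1 - δ) * (1 + ε) ^ (2 * d) := by
    have : (0:ℝ) ≤ (1 + ε) ^ (2 * d) := by positivity
    nlinarith
  set η : ℝ := cΓ * (1 - (1 - δ) * (1 + ε) ^ (2 * d)) / 2 with hηdef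
  have hη : 0 < η := by
    have : 0 < 1 - (1 - δ) * (1 + ε) ^ (2 * d) := by linarith
    positivity
  have hkeyq : (1 - δ) * (1 + ε) ^ (2 * d) * (cΓ + η) ≤ cΓ - η := by
    rw [hηdef]
    nlinarith [sq_nonneg ((1 - δ) * (1 + ε) ^ (2 * d) - 1), hq0, hq1, hc]
  obtain ⟨N, hN⟩ : ∃ N : ℕ, ∀ n ≥ N,
      |((wordBall S 1 (n : ℝ)).ncard : ℝ) / (n:ℝ)^d - cΓ| < η := by
    obtain ⟨N, hN⟩ := (Metric.tendsto_atTop.mp hP) η hη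
    exact ⟨N, fun n hn => by simpa [Real.dist_eq] using hN n hn⟩
  -- the key comparison
  have key : ∀ n m : ℕ, N ≤ n → N ≤ m → 1 ≤ n → 1 ≤ m → (m : ℝ) ≤ (1 + ε)^2 * n →
      (1 - δ) * ((wordBall S 1 (m : ℝ)).ncard : ℝ) ≤ ((wordBall S 1 (n : ℝ)).ncard : ℝ) := by
    intro n m hn hm hn1 hm1 hmn
    set a : ℕ → ℝ := fun n => ((wordBall S 1 (n : ℝ)).ncard : ℝ) with hadef
    have hn0 : (0:ℝ) < (n:ℝ) := by exact_mod_cast hn1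
    have hm0 : (0:ℝ) < (m:ℝ) := by exact_mod_cast hm1
    have hnd : (0:ℝ) < (n:ℝ)^d := by positivity
    have hmd : (0:ℝ) < (m:ℝ)^d := by positivity
    have h1 := hN m hm
    have h2 := hN n hn
    rw [abs_lt] at h1 h2
    have ham : a m ≤ (cΓ + η) * (m:ℝ)^d := by
      have := (div_lt_iff₀ hmd).mp (by linarith [h1.2] : a m / (m:ℝ)^d < cΓ + η)
      linarith
    have han : (cΓ - η) * (n:ℝ)^d ≤ a n := by
      have := (lt_div_iff₀ hnd).mp (by linarith [h2.1] : cΓ - η < a n / (n:ℝ)^d)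
      linarith
    have hpow : (m:ℝ)^d ≤ (1 + ε)^(2*d) * (n:ℝ)^d := by
      calc (m:ℝ)^d ≤ ((1+ε)^2 * (n:ℝ))^d := pow_le_pow_left₀ (Nat.cast_nonneg m) hmn d
        _ = (1+ε)^(2*d) * (n:ℝ)^d := by rw [mul_pow, ← pow_mul]
    have ham' : a m ≤ (cΓ + η) * ((1+ε)^(2*d) * (n:ℝ)^d) :=
      ham.trans (mul_le_mul_of_nonneg_left hpow (by linarith))
    have hA := mul_le_mul_of_nonneg_left ham' (by linarith : (0:ℝ) ≤ 1 - δ)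
    have hB := mul_le_mul_of_nonneg_right hkeyq hnd.le
    nlinarith [hA, hB, han]
  refine ⟨max (max N 3) ⌈1/ε⌉₊, max 3 ⌈2 + 4/ε⌉₊, ?_, ?_, ?_⟩
  · have h3 : 3 ≤ max (max N 3) ⌈1/ε⌉₊ := le_trans (le_max_right N 3) (le_max_left _ _)
    omega
  · have h3 : 3 ≤ max 3 ⌈2 + 4/ε⌉₊ := le_max_left _ _
    omega
  intro k y s hsn hdisj r hr
  set n₀ : ℕ := max (max N 3) ⌈1/ε⌉₊ with hn₀def
  -- facts about r
  have hr3 : (3:ℝ) ≤ r := by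
    have : ((3:ℕ):ℝ) ≤ ((max 3 ⌈2 + 4/ε⌉₊ : ℕ) : ℝ) := by
      exact_mod_cast le_max_left 3 ⌈2 + 4/ε⌉₊
    calc (3:ℝ) = ((3:ℕ):ℝ) := by norm_num
      _ ≤ _ := this
      _ ≤ r := hr
  have hr2 : (0:ℝ) < r - 2 := by linarith
  have hεr : 4 / (r - 2) ≤ ε := by
    have h1 : 2 + 4/ε ≤ r := by
      calc 2 + 4/ε ≤ (⌈2 + 4/ε⌉₊ : ℝ) := Nat.le_ceil _
        _ ≤ ((max 3 ⌈2 + 4/ε⌉₊ : ℕ) : ℝ) := by exact_mod_cast le_max_right 3 ⌈2 + 4/ε⌉₊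
        _ ≤ r := hr
    have h2 : 4/ε ≤ r - 2 := by linarith
    have h3 : 4 ≤ (r - 2) * ε := (div_le_iff₀ hε).mp h2
    rw [div_le_iff₀ hr2]
    linarith
  have hfac0 : (0:ℝ) < 4 / (r - 2) := by positivity
  -- per-ball inequality
  have perball : ∀ i : Fin k,
      (1 - δ) * ((wordBall S (y i) ((1 + 4 / (r - 2)) * s i)).ncard : ℝ) ≤
        ((wordBall S (y i) (s i)).ncard : ℝ) := by
    intro i
    have hsi := hsn i
    have hn₀3 : (3:ℝ) ≤ (n₀:ℝ) := by
      have : (3:ℕ) ≤ n₀ := le_trans (le_max_right N 3) (le_max_left _ _)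
      exact_mod_cast this
    have hs0 : (0:ℝ) < s i := by linarith
    set n : ℕ := ⌊s i⌋₊ with hndef
    set m : ℕ := ⌊(1 + 4 / (r - 2)) * s i⌋₊ with hmdef
    have hn₀n : n₀ ≤ n := Nat.le_floor hsi.le
    have h3n : (3:ℕ) ≤ n₀ := le_trans (le_max_right N 3) (le_max_left _ _)
    have hNn₀ : N ≤ n₀ := le_trans (le_max_left N 3) (le_max_left _ _)
    have hNn : N ≤ n := hNn₀.trans hn₀n
    have hn1 : 1 ≤ n := by omega
    have hεn : 1/ε ≤ (n:ℝ) := by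
      have h1 : ⌈1/ε⌉₊ ≤ n := le_trans (le_max_right _ _) hn₀n
      exact Nat.ceil_le.mp h1
    have hnm : n ≤ m := Nat.floor_le_floor (le_mul_of_one_le_left hs0.le (by linarith))
    have hNm : N ≤ m := le_trans hNn hnm
    have hm1 : 1 ≤ m := le_trans hn1 hnm
    have hmub : (m:ℝ) ≤ (1 + ε)^2 * n := by
      have h1 : (m:ℝ) ≤ (1 + 4 / (r - 2)) * s i := Nat.floor_le (by positivity)
      have h2 : (1 + 4 / (r - 2)) * s i ≤ (1 + ε) * s i :=
        mul_le_mul_of_nonneg_right (by linarith) hs0.le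
      have h3 : s i < (n:ℝ) + 1 := Nat.lt_floor_add_one (s i)
      have h4 : 1 ≤ ε * (n:ℝ) := by
        have := (div_le_iff₀ hε).mp hεn
        linarith
      nlinarith
    have e1 : (wordBall S (y i) (s i)).ncard = (wordBall S 1 ((n:ℕ) : ℝ)).ncard :=
      wordBall_ncard S (y i) hs0.le
    have e2 : (wordBall S (y i) ((1 + 4 / (r - 2)) * s i)).ncard
        = (wordBall S 1 ((m:ℕ) : ℝ)).ncard := wordBall_ncard S (y i) (by positivity)
    rw [e1, e2]
    exact key n m hNn hNm hn1 hm1 hmub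
  -- assemble with Finsets
  have hfin : ∀ i : Fin k, (wordBall S (y i) (s i)).Finite :=
    fun i => wordBall_finite S hS _ _
  have hfin' : ∀ i : Fin k, (wordBall S (y i) ((1 + 4 / (r - 2)) * s i)).Finite :=
    fun i => wordBall_finite S hS _ _
  set F : Fin k → Finset Γ := fun i => (hfin i).toFinset with hFdef
  set F' : Fin k → Finset Γ := fun i => (hfin' i).toFinset with hF'def
  have hU : (⋃ i, wordBall S (y i) (s i)) = ↑(Finset.univ.biUnion F) := by
    ext x
    simp only [Set.mem_iUnion, Finset.coe_biUnion, Finset.mem_coe, Finset.mem_biUnion,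
      Finset.mem_univ, true_and, Set.mem_iUnion]
    constructor
    · rintro ⟨i, hi⟩
      exact ⟨i, trivial, (hfin i).mem_toFinset.mpr hi⟩
    · rintro ⟨i, -, hi⟩
      exact ⟨i, (hfin i).mem_toFinset.mp hi⟩
  have hU' : (⋃ i, wordBall S (y i) ((1 + 4 / (r - 2)) * s i)) = ↑(Finset.univ.biUnion F') := by
    ext x
    simp only [Set.mem_iUnion, Finset.coe_biUnion, Finset.mem_coe, Finset.mem_biUnion,
      Finset.mem_univ, true_and, Set.mem_iUnion]
    constructor
    · rintro ⟨i, hi⟩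
      exact ⟨i, trivial, (hfin' i).mem_toFinset.mpr hi⟩
    · rintro ⟨i, -, hi⟩
      exact ⟨i, (hfin' i).mem_toFinset.mp hi⟩
  rw [hU, hU', Set.ncard_coe_finset, Set.ncard_coe_finset]
  have hdisjF : ∀ i ∈ Finset.univ, ∀ j ∈ Finset.univ, i ≠ j → Disjoint (F i) (F j) := by
    intro i _ j _ hij
    exact Set.Finite.disjoint_toFinset.mpr (hdisj hij)
  rw [Finset.card_biUnion hdisjF]
  have hcards : ∀ i : Fin k, ((F i).card : ℝ) = ((wordBall S (y i) (s i)).ncard : ℝ) := by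
    intro i
    rw [hFdef, Set.ncard_eq_toFinset_card _ (hfin i)]
  have hcards' : ∀ i : Fin k, ((F' i).card : ℝ)
      = ((wordBall S (y i) ((1 + 4 / (r - 2)) * s i)).ncard : ℝ) := by
    intro i
    rw [hF'def, Set.ncard_eq_toFinset_card _ (hfin' i)]
  calc (1 - δ) * ((Finset.univ.biUnion F').card : ℝ)
      ≤ (1 - δ) * (∑ i, ((F' i).card : ℝ)) := by
        apply mul_le_mul_of_nonneg_left _ (by linarith : (0:ℝ) ≤ 1 - δ)
        have := Finset.card_biUnion_le (s := (Finset.univ : Finset (Fin k))) (t := F')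
        push_cast
        exact_mod_cast this
    _ = ∑ i, (1 - δ) * ((F' i).card : ℝ) := Finset.mul_sum _ _ _
    _ ≤ ∑ i, ((F i).card : ℝ) := by
        apply Finset.sum_le_sum
        intro i _
        rw [hcards, hcards']
        exact perball i
    _ = ((∑ i, (F i).card : ℕ) : ℝ) := by push_cast; rfl
end
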